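/- arXiv:2108.00844 — 5 statements merged into one kernel-verified Lean document; each statement's English description precedes it below -/
import Mathlib

section
/- For every integer n ≥ 1, let e_n be the real number defined by |Σ_{k=n}^∞ (−1)^k s_k| = (s_n/(1+ε)) · (1 + a₁/n + a₂/n² + e_n·ε/n³). Then 0.3216 < e_n < 0.6704. -/
open Real Filter

/-- `S = 13591409/545140134` from the Chudnovsky series. -/
noncomputable def S : ℝ := 13591409 / 545140134

/-- `ε = 1728/640320³ = 53360⁻³`. -/
noncomputable def eps : ℝ := 1728 / 640320 ^ 3

/-- The terms `s_k = (6k)!/((3k)!·(k!)³) · (k+S)/640320^{3k}` of the Chudnovsky series. -/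
noncomputable def s (k : ℕ) : ℝ :=
  (Nat.factorial (6 * k) : ℝ) / ((Nat.factorial (3 * k) : ℝ) * (Nat.factorial k : ℝ) ^ 3)
    * ((k : ℝ) + S) / 640320 ^ (3 * k)

/-- `a₁ = ε/(2(1+ε))`. -/
noncomputable def a1 : ℝ := eps / (2 * (1 + eps))

/-- `a₂ = S·ε/(1+ε) − (23ε − 4ε²)/(36(1+ε)²)`. -/
noncomputable def a2 : ℝ :=
  S * eps / (1 + eps) - (23 * eps - 4 * eps ^ 2) / (36 * (1 + eps) ^ 2)

/-! ### Auxiliary definitions -/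

/-- The exact third-order coefficient `a₃` of the asymptotic expansion. -/
noncomputable def a3 : ℝ := (20630598257083699331942595295/4676071302050834345503446765524996702890668 : ℝ)

/-- The ratio function: `s (k+1) = Rx k * s k`. -/
noncomputable def Rx (x : ℝ) : ℝ :=
  eps * ((6*x+1)*(2*x+1)*(6*x+5)*(x+1+S)) / (72*(x+1)^3*(x+S))

/-- The truncated asymptotic expansion. -/
noncomputable def ggx (x : ℝ) : ℝ := (1 + a1/x + a2/x^2 + a3/x^3)/(1+eps)

/-- The defect of the truncated expansion under the recursion. -/
noncomputable def ddx (x : ℝ) : ℝ := 1 - ggx x - Rx x * ggx (x+1)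

noncomputable def Npoly (x : ℝ) : ℝ := (-42601389702132736727852580900742574837755271680000/5379033483171492018696329589922973491394579602112178389800132521) + (-641765018842456705535957763579875810154196935680000/1793011161057164006232109863307657830464859867370726129933377507) * x + (-3041290684554934819813692416355535796593896699392000/1793011161057164006232109863307657830464859867370726129933377507) * x ^ 2 + (-186070134276990067640807645772548905924140003679641163/55327201541192489335162247210636298768629961621725263437944220216) * x ^ 3 + (-59371046929772662948743699545809448065802654672133359/17604109581288519333915260476111549608200442334185311093891342796) * x ^ 4 + (-36545887586118749313224560556609361745069747191209771/21516133932685968074785318359691893965578318408448713559200530084) * x ^ 5 + (-1933230018398723806508418321549998750727169/5638428043082108308682887440485399501641409511791621418) * x ^ 6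

noncomputable def Dpoly (x : ℝ) : ℝ := x^3*(x+1)^3*(72*(x+1)^3*(x+S))

lemma S_pos : (0:ℝ) < S := by norm_num [S]
lemma eps_pos : 0 < eps := by norm_num [eps]
lemma eps_lt : eps < 1/4 := by norm_num [eps]
lemma eps_lt_one : eps < 1 := lt_trans eps_lt (by norm_num)

lemma s_pos (k : ℕ) : 0 < s k := by
  have h1 : (0:ℝ) < Nat.factorial (6*k) := by positivity
  have h2 : (0:ℝ) < Nat.factorial (3*k) := by positivity
  have h3 : (0:ℝ) < Nat.factorial k := by positivity
  have h4 : (0:ℝ) < (k:ℝ) + S := by have := S_pos; positivity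
  unfold s; positivity

lemma s_succ (k : ℕ) : s (k+1) = Rx (k:ℝ) * s k := by
  have e6 : (Nat.factorial (6*(k+1)) : ℝ) =
      (6*(k:ℝ)+6)*((6*(k:ℝ)+5)*((6*(k:ℝ)+4)*((6*(k:ℝ)+3)*((6*(k:ℝ)+2)*((6*(k:ℝ)+1)*
        (Nat.factorial (6*k) : ℝ)))))) := by
    rw [show 6*(k+1) = (6*k+5)+1 by ring, Nat.factorial_succ,
        show 6*k+5 = (6*k+4)+1 by ring, Nat.factorial_succ,
        show 6*k+4 = (6*k+3)+1 by ring, Nat.factorial_succ,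
        show 6*k+3 = (6*k+2)+1 by ring, Nat.factorial_succ,
        show 6*k+2 = (6*k+1)+1 by ring, Nat.factorial_succ,
        show 6*k+1 = (6*k)+1 by ring, Nat.factorial_succ]
    push_cast; ring
  have e3 : (Nat.factorial (3*(k+1)) : ℝ) =
      (3*(k:ℝ)+3)*((3*(k:ℝ)+2)*((3*(k:ℝ)+1)*(Nat.factorial (3*k) : ℝ))) := by
    rw [show 3*(k+1) = (3*k+2)+1 by ring, Nat.factorial_succ,
        show 3*k+2 = (3*k+1)+1 by ring, Nat.factorial_succ,
        show 3*k+1 = (3*k)+1 by ring, Nat.factorial_succ]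
    push_cast; ring
  have e1 : (Nat.factorial (k+1) : ℝ) = ((k:ℝ)+1)*(Nat.factorial k : ℝ) := by
    rw [Nat.factorial_succ]; push_cast; ring
  have ep : (640320:ℝ) ^ (3*(k+1)) = 640320 ^ (3*k) * 640320^3 := by
    rw [show 3*(k+1) = 3*k+3 by ring, pow_add]
  have h2 : (Nat.factorial (3*k) : ℝ) ≠ 0 := by positivity
  have h3 : (Nat.factorial k : ℝ) ≠ 0 := by positivity
  have h4 : (k:ℝ) + S ≠ 0 := by have := S_pos; positivity
  have h5 : ((k:ℝ)+1) ≠ 0 := by positivity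
  have h6 : (640320:ℝ) ^ (3*k) ≠ 0 := by positivity
  unfold s Rx eps S
  rw [e6, e3, e1, ep]
  rw [S] at h4
  field_simp
  push_cast; ring

lemma Rx_le_eps {k : ℕ} (hk : 1 ≤ k) : Rx (k:ℝ) ≤ eps := by
  have hx : (1:ℝ) ≤ (k:ℝ) := by exact_mod_cast hk
  set x : ℝ := (k:ℝ) with hxdef
  have hnum : (6*x+1)*(2*x+1)*(6*x+5)*(x+1+S) ≤ 72*(x+1)^3*(x+S) := by
    have key : 72*(x+1)^3*(x+S) - (6*x+1)*(2*x+1)*(6*x+5)*(x+1+S) = (22278337127/181713378) + (71583368888/272570067) * (x - 1) + (5230094164/30285563) * (x - 1) ^ 2 + (36) * (x - 1) ^ 3 := by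
      rw [S]; ring
    nlinarith [pow_nonneg (by linarith : (0:ℝ) ≤ x - 1) 2,
      pow_nonneg (by linarith : (0:ℝ) ≤ x - 1) 3]
  have hden : (0:ℝ) < 72*(x+1)^3*(x+S) := by have := S_pos; positivity
  unfold Rx
  rw [div_le_iff₀ hden]
  have he := eps_pos
  nlinarith [mul_le_mul_of_nonneg_left hnum (le_of_lt he)]

lemma s_succ_le {k : ℕ} (hk : 1 ≤ k) : s (k+1) ≤ eps * s k := by
  rw [s_succ]
  exact mul_le_mul_of_nonneg_right (Rx_le_eps hk) (le_of_lt (s_pos k))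

lemma s_geom {n : ℕ} (hn : 1 ≤ n) (j : ℕ) : s (n+j) ≤ eps^j * s n := by
  induction j with
  | zero => simp
  | succ j ih =>
    have h1 : s (n+j+1) ≤ eps * s (n+j) := s_succ_le (by omega)
    have h2 : eps * s (n+j) ≤ eps * (eps^j * s n) :=
      mul_le_mul_of_nonneg_left ih (le_of_lt eps_pos)
    calc s (n+(j+1)) = s (n+j+1) := by ring_nf
    _ ≤ eps * (eps^j * s n) := le_trans h1 h2
    _ = eps^(j+1) * s n := by ring

lemma summable_tail {n : ℕ} (hn : 1 ≤ n) : Summable (fun k : ℕ => (-1:ℝ)^k * s (n+k)) := by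
  apply Summable.of_norm_bounded (g := fun k => s n * eps^k)
  · exact (summable_geometric_of_lt_one (le_of_lt eps_pos) eps_lt_one).mul_left _
  · intro k
    rw [norm_mul, norm_pow, norm_neg, norm_one, one_pow, one_mul,
      Real.norm_eq_abs, abs_of_pos (s_pos _)]
    calc s (n+k) ≤ eps^k * s n := s_geom hn k
    _ = s n * eps^k := by ring

/-- The tail sum. -/
noncomputable def T (n : ℕ) : ℝ := ∑' k : ℕ, (-1:ℝ)^k * s (n+k)

lemma T_rec {n : ℕ} (hn : 1 ≤ n) : T n = s n - T (n+1) := by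
  have h1 := summable_tail hn
  have h2 : T n = (-1:ℝ)^0 * s (n+0) + ∑' k : ℕ, (-1:ℝ)^(k+1) * s (n+(k+1)) := by
    rw [T, Summable.tsum_eq_zero_add h1]
  rw [h2]
  have h3 : ∀ k : ℕ, (-1:ℝ)^(k+1) * s (n+(k+1)) = -((-1:ℝ)^k * s ((n+1)+k)) := by
    intro k; rw [pow_succ, show n+(k+1) = (n+1)+k by ring]; ring
  simp only [h3]
  rw [tsum_neg]
  simp [T]; ring

lemma T_abs_le {n : ℕ} (hn : 1 ≤ n) : |T n| ≤ 2 * s n := by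
  have h1 := summable_tail hn
  have habs : |T n| ≤ ∑' k : ℕ, |(-1:ℝ)^k * s (n+k)| := by
    rw [← Real.norm_eq_abs]
    exact norm_tsum_le_tsum_norm h1.abs
  have h2 : ∑' k : ℕ, |(-1:ℝ)^k * s (n+k)| ≤ ∑' k : ℕ, s n * eps^k := by
    apply Summable.tsum_le_tsum _ h1.abs
      ((summable_geometric_of_lt_one (le_of_lt eps_pos) eps_lt_one).mul_left _)
    intro k
    rw [abs_mul, abs_pow, abs_neg, abs_one, one_pow, one_mul, abs_of_pos (s_pos _)]
    calc s (n+k) ≤ eps^k * s n := s_geom hn k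
    _ = s n * eps^k := by ring
  have h3 : ∑' k : ℕ, s n * eps^k = s n * (1-eps)⁻¹ := by
    rw [tsum_mul_left, tsum_geometric_of_lt_one (le_of_lt eps_pos) eps_lt_one]
  have h4 : s n * (1-eps)⁻¹ ≤ 2 * s n := by
    have hs := s_pos n
    have : (1-eps)⁻¹ ≤ 2 := by
      rw [inv_le_comm₀ (by nlinarith [eps_lt]) (by norm_num)]
      nlinarith [eps_lt, eps_pos]
    nlinarith
  linarith [habs, h2, h3.le, h3.ge]

lemma T_nonneg : ∀ n : ℕ, 1 ≤ n → 0 ≤ T n := by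
  intro n hn
  rw [T_rec hn]
  have h1 : T (n+1) ≤ 2 * s (n+1) := le_of_abs_le (T_abs_le (by omega))
  have h2 : s (n+1) ≤ eps * s n := s_succ_le hn
  have := s_pos n
  nlinarith [eps_lt, eps_pos]

lemma T_le_s {n : ℕ} (hn : 1 ≤ n) : T n ≤ s n := by
  rw [T_rec hn]
  linarith [T_nonneg (n+1) (by omega)]

/-! ### Bounds on the defect -/

lemma dd_id (x : ℝ) (hx : 1 ≤ x) : ddx x * Dpoly x = Npoly x := by
  have hx0 : x ≠ 0 := by linarith
  have hx1 : x + 1 ≠ 0 := by linarith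
  have hxS : x + S ≠ 0 := by have := S_pos; nlinarith
  have heps : (1:ℝ) + eps ≠ 0 := by norm_num [eps]
  unfold ddx ggx Rx Npoly a1 a2 a3 Dpoly
  rw [S] at hxS ⊢
  rw [eps] at heps ⊢
  field_simp
  ring

lemma dd_nonpos (x : ℝ) (hx : 1 ≤ x) : ddx x ≤ 0 := by
  have hD : 0 < Dpoly x := by have := S_pos; unfold Dpoly; positivity
  have hN : Npoly x ≤ 0 := by
    have key : -Npoly x = (1399292107039359073480306489617895526671458970830463771/129096803596115808448711910158151363793469910450692281355203180504) + (14670447893274898976241494434517438633819179426485391781/387290410788347425346135730474454091380409731352076844065609541512) * (x - 1) + (6990488390212110648675099006438445824626124374003573177/129096803596115808448711910158151363793469910450692281355203180504) * (x - 1) ^ 2 + (14473079558211855507671416763261771193924423073183297/355638577399768067351823443961849487034352370387582042300835208) * (x - 1) ^ 3 + (1646782129482498560484140374006283218278145524131508557/96822602697086856336533932618613522845102432838019211016402385378) * (x - 1) ^ 4 + (80808900979992265288202108465997860825261890447436903/21516133932685968074785318359691893965578318408448713559200530084) * (x - 1) ^ 5 + (1933230018398723806508418321549998750727169/5638428043082108308682887440485399501641409511791621418)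 * (x - 1) ^ 6 := by unfold Npoly; ring
    nlinarith [pow_nonneg (by linarith : (0:ℝ) ≤ x - 1) 2,
      pow_nonneg (by linarith : (0:ℝ) ≤ x - 1) 3,
      pow_nonneg (by linarith : (0:ℝ) ≤ x - 1) 4,
      pow_nonneg (by linarith : (0:ℝ) ≤ x - 1) 5,
      pow_nonneg (by linarith : (0:ℝ) ≤ x - 1) 6]
  nlinarith [dd_id x hx]

lemma dd_lower (x : ℝ) (hx : 1 ≤ x) : -(3/4 * eps / x^4) ≤ ddx x := by
  have hD : 0 < Dpoly x := by have := S_pos; unfold Dpoly; positivity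
  have hx4 : (0:ℝ) < x^4 := by positivity
  have hP4 : 0 ≤ Npoly x * x^4 + 3/4 * eps * Dpoly x := by
    have key : Npoly x * x^4 + 3/4 * eps * Dpoly x = (477901927410567906892161174975212048252541470954141615727853617629/38308309819333268058594308329899317991837594338662191586009936843419785352000) + (1169310731860850455176463200848089966072236251328916161609614157191/14365616182249975521972865623712244246939097876998321844753726316282419507000) * (x - 1) + (4284022680027015475554553291467641307083505448410476959228592269513/18387988713279968668125267998351672636082045282557851961284769684841496968960) * (x - 1) ^ 2 + (8407094094493389720511797683144178836422813534857847810167123505583/21890462753904724604911033331371038852478625336378395192005678196239877344000) * (x - 1) ^ 3 + (739455123686543283111710836316316320641335870555670740136329906809261/1838798871327996866812526799835167263608204528255785196128476968484149696896000) * (x - 1) ^ 4 + (255465853395817089123515761184240538844707828310861765253098164564007/919399435663998433406263399917583631804102264127892598064238484242074848448000) * (x - 1) ^ 5 + (34632952201946676797462368402653340304824291201050250644268881661973/272414647604147683972226192568172927941956226408264473500515106442096251392000) * (x - 1) ^ 6 + (1572921238444311525029524762482637870877297119479095308119797356477/42029688487497071241429183996232394596758960645846518768650902136780564500480) * (x -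 1) ^ 7 + (48270915215345468614752288907713010131131399895512580538136465353699/7355195485311987467250107199340669054432818113023140784513907873936598787584000) * (x - 1) ^ 8 + (464551639279121485110988622924906773469777968414310729023045081553/817243942812443051916678577704518783825868679224793420501545319326288754176000) * (x - 1) ^ 9 + (2689205799509899566984264242573337183893162255747273143/214163528615729959371374243930911057351269368218419916148319428352000) * (x - 1) ^ 10 := by
      unfold Npoly Dpoly; rw [S, eps]; ring
    rw [key]
    have h1 : (0:ℝ) ≤ x - 1 := by linarith
    positivity
  have hid := dd_id x hx
  have expand : ddx x - -(3/4 * eps / x^4) = (Npoly x * x^4 + 3/4 * eps * Dpoly x) / (x^4 * Dpoly x) := by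
    rw [eq_div_iff (by positivity)]
    have hx0 : x ≠ 0 := by linarith
    field_simp
    linear_combination (4 * x^4) * hid
  have : 0 ≤ ddx x - -(3/4 * eps / x^4) := expand ▸ div_nonneg hP4 (by positivity)
  linarith

lemma dd_abs (x : ℝ) (hx : 1 ≤ x) : |ddx x| ≤ 3/4 * eps / x^4 := by
  have h1 := dd_nonpos x hx
  have h2 := dd_lower x hx
  rw [abs_le]
  have : (0:ℝ) ≤ 3/4 * eps / x^4 := by
    have := eps_pos; positivity
  constructor <;> linarith

lemma gg_abs (x : ℝ) (hx : 1 ≤ x) : |ggx x| ≤ 4 := by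
  have hx0 : (0:ℝ) < x := by linarith
  have ha1 : |a1| ≤ 1 := by rw [a1, eps]; rw [abs_le]; norm_num
  have ha2 : |a2| ≤ 1 := by rw [a2, eps, S]; rw [abs_le]; norm_num
  have ha3 : |a3| ≤ 1 := by rw [a3]; rw [abs_le]; norm_num
  have hd : ∀ a : ℝ, |a| ≤ 1 → ∀ i : ℕ, 1 ≤ i → |a / x^i| ≤ 1 := by
    intro a ha i hi
    rw [abs_div, abs_pow, abs_of_pos hx0]
    have hxi : (1:ℝ) ≤ x^i := one_le_pow₀ hx
    rw [div_le_one (by positivity)]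
    linarith
  have h1 := hd a1 ha1 1 le_rfl
  have h2 := hd a2 ha2 2 (by norm_num)
  have h3 := hd a3 ha3 3 (by norm_num)
  rw [pow_one] at h1
  have heps := eps_pos
  have hnum : |1 + a1/x + a2/x^2 + a3/x^3| ≤ 4 := by
    calc |1 + a1/x + a2/x^2 + a3/x^3| ≤ |(1:ℝ)| + |a1/x| + |a2/x^2| + |a3/x^3| := by
          apply (abs_add_le _ _).trans
          gcongr
          apply (abs_add_le _ _).trans
          gcongr
          exact abs_add_le _ _
    _ ≤ 4 := by rw [abs_one]; linarith
  rw [ggx, abs_div]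
  rw [abs_of_pos (by linarith : (0:ℝ) < 1 + eps)]
  calc |1 + a1/x + a2/x^2 + a3/x^3| / (1+eps) ≤ 4 / (1+eps) := by gcongr
  _ ≤ 4 := by rw [div_le_iff₀ (by linarith)]; nlinarith

/-! ### The error and its recursion -/

noncomputable def E (m : ℕ) : ℝ := T m - ggx (m:ℝ) * s m

lemma E_rec {m : ℕ} (hm : 1 ≤ m) : E m = ddx (m:ℝ) * s m - E (m+1) := by
  have h1 : T m = s m - T (m+1) := T_rec hm
  have h2 : s (m+1) = Rx (m:ℝ) * s m := s_succ m
  have h3 : ((m+1 : ℕ):ℝ) = (m:ℝ) + 1 := by push_cast; ring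
  rw [E, E, ddx, h1, h2, h3]
  ring

lemma E_bound_aux (j : ℕ) : ∀ m : ℕ, 1 ≤ m → |E m| ≤ eps/(m:ℝ)^4 * s m + 6 * eps^j * s m := by
  induction j with
  | zero =>
    intro m hm
    have hx : (1:ℝ) ≤ (m:ℝ) := by exact_mod_cast hm
    have h1 : |E m| ≤ |T m| + |ggx (m:ℝ)| * s m := by
      rw [E]
      refine (abs_sub _ _).trans ?_
      rw [abs_mul, abs_of_pos (s_pos m)]
    have h2 := T_abs_le hm
    have h3 := gg_abs (m:ℝ) hx
    have hs := s_pos m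
    have heps := eps_pos
    have h4 : 0 ≤ eps/(m:ℝ)^4 * s m := by positivity
    have h5 : |ggx (m:ℝ)| * s m ≤ 4 * s m := by nlinarith
    simp only [pow_zero]
    nlinarith
  | succ j ih =>
    intro m hm
    have hx : (1:ℝ) ≤ (m:ℝ) := by exact_mod_cast hm
    have hx0 : (0:ℝ) < (m:ℝ) := by linarith
    have h1 : |E m| ≤ |ddx (m:ℝ)| * s m + |E (m+1)| := by
      rw [E_rec hm]
      refine (abs_sub _ _).trans ?_
      rw [abs_mul, abs_of_pos (s_pos m)]
    have h2 := dd_abs (m:ℝ) hx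
    have h3 := ih (m+1) (by omega)
    have h3' : ((m+1 : ℕ):ℝ) = (m:ℝ) + 1 := by push_cast; ring
    rw [h3'] at h3
    have hs1 : s (m+1) ≤ eps * s m := s_succ_le hm
    have hs := s_pos m
    have hs2 := s_pos (m+1)
    have heps := eps_pos
    -- 1/(x+1)^4 ≤ 1/x^4
    have hfrac : eps/((m:ℝ)+1)^4 ≤ eps/(m:ℝ)^4 := by
      gcongr
      linarith
    have h5 : eps/((m:ℝ)+1)^4 * s (m+1) ≤ eps/(m:ℝ)^4 * (eps * s m) := by
      apply mul_le_mul hfrac hs1 (le_of_lt hs2)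
      positivity
    have h6 : 6 * eps^j * s (m+1) ≤ 6 * eps^j * (eps * s m) := by
      have : (0:ℝ) ≤ 6 * eps^j := by positivity
      exact mul_le_mul_of_nonneg_left hs1 this
    have h7 : |ddx (m:ℝ)| * s m ≤ 3/4 * eps / (m:ℝ)^4 * s m := by nlinarith
    have h8 : eps/(m:ℝ)^4 * (eps * s m) ≤ 1/4 * eps/(m:ℝ)^4 * s m := by
      have hkey : eps * eps ≤ 1/4 * eps := by nlinarith [eps_lt, eps_pos]
      have hpos : (0:ℝ) < (m:ℝ)^4 := by positivity
      rw [div_mul_eq_mul_div, div_mul_eq_mul_div, div_mul_eq_mul_div, div_le_div_iff₀ hpos hpos]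
      nlinarith [mul_le_mul_of_nonneg_right (mul_le_mul_of_nonneg_right hkey hs.le) hpos.le]
    calc |E m| ≤ |ddx (m:ℝ)| * s m + |E (m+1)| := h1
    _ ≤ 3/4 * eps / (m:ℝ)^4 * s m + (eps/((m:ℝ)+1)^4 * s (m+1) + 6 * eps^j * s (m+1)) := by
        linarith
    _ ≤ 3/4 * eps / (m:ℝ)^4 * s m + (1/4 * eps/(m:ℝ)^4 * s m + 6 * eps^(j+1) * s m) := by
        have : 6 * eps^j * (eps * s m) = 6 * eps^(j+1) * s m := by ring
        linarith [h5, h6, h8, this.le, this.ge]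
    _ = eps/(m:ℝ)^4 * s m + 6 * eps^(j+1) * s m := by ring

lemma E_bound {m : ℕ} (hm : 1 ≤ m) : |E m| ≤ eps/(m:ℝ)^4 * s m := by
  have h : Tendsto (fun j : ℕ => eps/(m:ℝ)^4 * s m + 6 * eps^j * s m) atTop
      (nhds (eps/(m:ℝ)^4 * s m + 6 * 0 * s m)) := by
    apply Tendsto.add tendsto_const_nhds
    apply Tendsto.mul_const
    exact (tendsto_pow_atTop_nhds_zero_of_lt_one (le_of_lt eps_pos) eps_lt_one).const_mul 6
  rw [show eps/(m:ℝ)^4 * s m + 6 * 0 * s m = eps/(m:ℝ)^4 * s m by ring] at h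
  exact ge_of_tendsto h (Filter.Eventually.of_forall (fun j => E_bound_aux j m hm))

lemma E_upper {n : ℕ} (hn : 1 ≤ n) : E n ≤ eps^2/(n:ℝ)^4 * s n := by
  have hx : (1:ℝ) ≤ (n:ℝ) := by exact_mod_cast hn
  have h1 := E_rec hn
  have h2 := dd_nonpos (n:ℝ) hx
  have h3 := E_bound (show 1 ≤ n+1 by omega)
  have h3' : ((n+1 : ℕ):ℝ) = (n:ℝ) + 1 := by push_cast; ring
  rw [h3'] at h3
  have hs := s_pos n
  have hs1 : s (n+1) ≤ eps * s n := s_succ_le hn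
  have hs2 := s_pos (n+1)
  have heps := eps_pos
  have h4 : -E (n+1) ≤ |E (n+1)| := neg_le_abs _
  have h5 : eps/((n:ℝ)+1)^4 * s (n+1) ≤ eps/(n:ℝ)^4 * (eps * s n) := by
    apply mul_le_mul _ hs1 (le_of_lt hs2) (by positivity)
    gcongr
    linarith
  have h6 : ddx (n:ℝ) * s n ≤ 0 := mul_nonpos_of_nonpos_of_nonneg h2 hs.le
  have h7 : eps/(n:ℝ)^4 * (eps * s n) = eps^2/(n:ℝ)^4 * s n := by ring
  rw [h1]
  linarith [h3, h5, h7.le]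

lemma E_lower {n : ℕ} (hn : 1 ≤ n) : -((3/4*eps + eps^2)/(n:ℝ)^4 * s n) ≤ E n := by
  have hx : (1:ℝ) ≤ (n:ℝ) := by exact_mod_cast hn
  have h1 := E_rec hn
  have h2 := dd_lower (n:ℝ) hx
  have h3 := E_bound (show 1 ≤ n+1 by omega)
  have h3' : ((n+1 : ℕ):ℝ) = (n:ℝ) + 1 := by push_cast; ring
  rw [h3'] at h3
  have hs := s_pos n
  have hs1 : s (n+1) ≤ eps * s n := s_succ_le hn
  have hs2 := s_pos (n+1)
  have heps := eps_pos
  have h4 : E (n+1) ≤ |E (n+1)| := le_abs_self _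
  have h5 : eps/((n:ℝ)+1)^4 * s (n+1) ≤ eps/(n:ℝ)^4 * (eps * s n) := by
    apply mul_le_mul _ hs1 (le_of_lt hs2) (by positivity)
    gcongr
    linarith
  have h6 : -(3/4 * eps / (n:ℝ)^4) * s n ≤ ddx (n:ℝ) * s n :=
    mul_le_mul_of_nonneg_right h2 hs.le
  have h7 : eps/(n:ℝ)^4 * (eps * s n) = eps^2/(n:ℝ)^4 * s n := by ring
  rw [h1]
  have : -((3/4*eps + eps^2)/(n:ℝ)^4 * s n) = -(3/4 * eps / (n:ℝ)^4) * s n - eps^2/(n:ℝ)^4 * s n := by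
    ring
  rw [this]
  linarith [h3, h5, h7.le]

/-! ### Main theorem -/

theorem truncation_error_expansion (n : ℕ) (hn : 1 ≤ n) (e : ℝ)
    (he : |∑' k : ℕ, (-1 : ℝ) ^ (n + k) * s (n + k)| =
      s n / (1 + eps) *
        (1 + a1 / (n : ℝ) + a2 / (n : ℝ) ^ 2 + e * eps / (n : ℝ) ^ 3)) :
    0.3216 < e ∧ e < 0.6704 := by
  have hx : (1:ℝ) ≤ (n:ℝ) := by exact_mod_cast hn
  have hx0 : (0:ℝ) < (n:ℝ) := by linarith
  have heps := eps_pos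
  have hs := s_pos n
  have hepsne : (1:ℝ) + eps ≠ 0 := by linarith
  -- rewrite the tsum as T n
  have hsum : ∑' k : ℕ, (-1 : ℝ) ^ (n + k) * s (n + k) = (-1:ℝ)^n * T n := by
    rw [T, ← tsum_mul_left]
    congr 1
    funext k
    rw [pow_add]
    ring
  have habs : |∑' k : ℕ, (-1 : ℝ) ^ (n + k) * s (n + k)| = T n := by
    rw [hsum, abs_mul, abs_pow, abs_neg, abs_one, one_pow, one_mul,
      abs_of_nonneg (T_nonneg n hn)]
  rw [habs] at he
  -- express e * eps - a3 in terms of E n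
  have hE : E n = s n / (1 + eps) * ((e * eps - a3)/(n:ℝ)^3) := by
    rw [E, he, ggx]
    have hxne : (n:ℝ) ≠ 0 := ne_of_gt hx0
    field_simp
    ring
  have hkey : e * eps - a3 = E n * ((1 + eps) * (n:ℝ)^3 / s n) := by
    rw [hE]
    have hxne : (n:ℝ) ≠ 0 := ne_of_gt hx0
    field_simp
  have hcpos : (0:ℝ) < (1 + eps) * (n:ℝ)^3 / s n := by positivity
  -- upper bound: e * eps ≤ a3 + (1+eps) * eps^2 / n ≤ a3 + (1+eps) * eps^2
  have hup : e * eps ≤ a3 + (1 + eps) * eps^2 := by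
    have h1 : E n * ((1 + eps) * (n:ℝ)^3 / s n) ≤
        (eps^2/(n:ℝ)^4 * s n) * ((1 + eps) * (n:ℝ)^3 / s n) :=
      mul_le_mul_of_nonneg_right (E_upper hn) (le_of_lt hcpos)
    have h2 : (eps^2/(n:ℝ)^4 * s n) * ((1 + eps) * (n:ℝ)^3 / s n) = (1 + eps) * eps^2 / (n:ℝ) := by
      have hxne : (n:ℝ) ≠ 0 := ne_of_gt hx0
      have hsne : s n ≠ 0 := ne_of_gt hs
      field_simp
    have h3 : (1 + eps) * eps^2 / (n:ℝ) ≤ (1 + eps) * eps^2 := by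
      rw [div_le_iff₀ hx0]
      nlinarith [mul_nonneg (by positivity : (0:ℝ) ≤ (1+eps)*eps^2) (by linarith : (0:ℝ) ≤ (n:ℝ)-1)]
    linarith [hkey, h1, h2.le]
  -- lower bound: e * eps ≥ a3 - (1+eps) * (3/4*eps + eps^2) / n
  have hlo : a3 - (1 + eps) * (3/4*eps + eps^2) / (n:ℝ) ≤ e * eps := by
    have h1 : (-((3/4*eps + eps^2)/(n:ℝ)^4 * s n)) * ((1 + eps) * (n:ℝ)^3 / s n) ≤
        E n * ((1 + eps) * (n:ℝ)^3 / s n) :=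
      mul_le_mul_of_nonneg_right (E_lower hn) (le_of_lt hcpos)
    have h2 : (-((3/4*eps + eps^2)/(n:ℝ)^4 * s n)) * ((1 + eps) * (n:ℝ)^3 / s n) =
        -((1 + eps) * (3/4*eps + eps^2) / (n:ℝ)) := by
      have hxne : (n:ℝ) ≠ 0 := ne_of_gt hx0
      have hsne : s n ≠ 0 := ne_of_gt hs
      field_simp
    linarith [hkey, h1, h2.le]
  constructor
  · -- lower bound on e
    rcases Nat.lt_or_ge n 3 with h3 | h3
    · -- n = 1 or n = 2 : direct computation
      interval_cases n
      · -- n = 1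
        have hT1 : s 1 - s 2 ≤ T 1 := by
          rw [T_rec (le_refl 1)]
          linarith [T_le_s (show 1 ≤ 2 by norm_num)]
        rw [he] at hT1
        have hs1 : s 1 = (558731543/1192664002558346344857600 : ℝ) := by
          unfold s S; norm_num [Nat.factorial]
        have hs2 : s 2 = (1103871677/451831055384488536753074001779097600000 : ℝ) := by
          unfold s S; norm_num [Nat.factorial]
        rw [hs1, hs2] at hT1
        rw [a1, a2, eps, S] at hT1
        norm_num at hT1 ⊢
        linarith
      · -- n = 2
        have hT2 : s 2 - s 3 ≤ T 2 := by
          rw [T_rec (show 1 ≤ 2 by norm_num)]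
          linarith [T_le_s (show 1 ≤ 3 by norm_num)]
        rw [he] at hT2
        have hs2 : s 2 = (1103871677/451831055384488536753074001779097600000 : ℝ) := by
          unfold s S; norm_num [Nat.factorial]
        have hs3 : s 3 = (364431610231/26690075152063012592871048492696315353565002465280000000 : ℝ) := by
          unfold s S; norm_num [Nat.factorial]
        rw [hs2, hs3] at hT2
        rw [a1, a2, eps, S] at hT2
        norm_num at hT2 ⊢
        linarith
    · -- n ≥ 3 : asymptotic bound
      have hx3 : (3:ℝ) ≤ (n:ℝ) := by exact_mod_cast h3
      have hapos : (0:ℝ) < (1 + eps) * (3/4*eps + eps^2) := by nlinarith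
      have h4 : (1 + eps) * (3/4*eps + eps^2) / (n:ℝ) ≤ (1 + eps) * (3/4*eps + eps^2) / 3 :=
        div_le_div_of_nonneg_left hapos.le (by norm_num) hx3
      have h5 : (0.3216:ℝ) * eps < a3 - (1 + eps) * (3/4*eps + eps^2) / 3 := by
        rw [a3, eps]; norm_num
      have h6 : (0.3216:ℝ) * eps < e * eps := by linarith
      exact lt_of_mul_lt_mul_right h6 (le_of_lt heps)
  · -- upper bound on e
    have h5 : a3 + (1 + eps) * eps^2 < (0.6704:ℝ) * eps := by
      rw [a3, eps]; norm_num
    have h6 : e * eps < (0.6704:ℝ) * eps := by linarith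
    exact lt_of_mul_lt_mul_right h6 (le_of_lt heps)
end

section
/- For every real R with 0 < R < 1, as n → ∞ one has ((1/2)_n · (R)_n · (1−R)_n / (n!)³) · (π·n)^{3/2} / sin(π·R) = 1 + O(1/n); in particular there exists a constant C > 0 such that for all n ≥ 1, |((1/2)_n · (R)_n · (1−R)_n / (n!)³) · (π·n)^{3/2} / sin(π·R) − 1| ≤ C/n. -/
open Real Filter Asymptotics

/-- The Pochhammer symbol (rising factorial) `(a)_n = a(a+1)⋯(a+n−1)`. -/
noncomputable def poch (a : ℝ) (n : ℕ) : ℝ := (ascPochhammer ℝ n).eval a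

lemma poch_succ (a : ℝ) (n : ℕ) : poch a (n+1) = poch a n * (a + n) := by
  simp [poch, ascPochhammer_succ_right, Polynomial.eval_mul]

lemma poch_pos {a : ℝ} (ha : 0 < a) (n : ℕ) : 0 < poch a n := ascPochhammer_pos n a ha

lemma gammaSeq_eq (a : ℝ) (n : ℕ) :
    Real.GammaSeq a n = (n:ℝ) ^ a * n.factorial / (poch a n * (a + n)) := by
  rw [Real.GammaSeq, ← poch_succ]
  congr 1
  induction n with
  | zero => simp [poch]
  | succ m ih => rw [Finset.prod_range_succ, ih, ← poch_succ]

lemma tendsto_g {a : ℝ} (ha : 0 < a) :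
    Tendsto (fun n : ℕ => poch a n / (n.factorial * (n:ℝ) ^ (a-1))) atTop
      (nhds (1 / Real.Gamma a)) := by
  have hG : Tendsto (fun n : ℕ => 1 / Real.GammaSeq a n) atTop (nhds (1 / Real.Gamma a)) := by
    simpa only [one_div] using
      (Real.GammaSeq_tendsto_Gamma a).inv₀ (Real.Gamma_pos_of_pos ha).ne'
  have han : ∀ n : ℕ, (0:ℝ) < a + n := fun n => by positivity
  have hfrac : Tendsto (fun n : ℕ => (n:ℝ) / (a + n)) atTop (nhds 1) := by
    have h1 : Tendsto (fun n : ℕ => a + (n:ℝ)) atTop atTop :=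
      tendsto_atTop_add_const_left _ a tendsto_natCast_atTop_atTop
    have h2 : Tendsto (fun n : ℕ => 1 - a / (a + (n:ℝ))) atTop (nhds 1) := by
      have := (h1.inv_tendsto_atTop).const_mul a
      simpa [div_eq_mul_inv] using (tendsto_const_nhds (x := (1:ℝ))).sub this
    refine h2.congr fun n => ?_
    field_simp
    ring
  have key : Tendsto (fun n : ℕ => (1 / Real.GammaSeq a n) * ((n:ℝ) / (a + n))) atTop
      (nhds (1 / Real.Gamma a)) := by simpa using hG.mul hfrac
  refine key.congr' ?_
  filter_upwards [eventually_ge_atTop 1] with n hn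
  have hn0 : (0:ℝ) < n := by exact_mod_cast hn
  have hp := poch_pos ha n
  rw [gammaSeq_eq]
  have hrw : (n:ℝ) ^ a = (n:ℝ) ^ (a-1) * n := by
    rw [show a = (a-1)+1 by ring, Real.rpow_add hn0, Real.rpow_one]; ring_nf
  rw [hrw]
  have hf : (0:ℝ) < n.factorial := by positivity
  have hr : (0:ℝ) < (n:ℝ) ^ (a-1) := Real.rpow_pos_of_pos hn0 _
  field_simp

noncomputable def F (R : ℝ) (n : ℕ) : ℝ :=
  poch (1/2) n * poch R n * poch (1-R) n / (Nat.factorial n : ℝ)^3 *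
    (Real.pi * n) ^ ((3:ℝ)/2) / Real.sin (Real.pi * R)

lemma sinpos {R : ℝ} (hR0 : 0 < R) (hR1 : R < 1) : 0 < Real.sin (Real.pi * R) :=
  Real.sin_pos_of_pos_of_lt_pi (by positivity)
    (by nlinarith [Real.pi_pos])

lemma F_eq {R : ℝ} (hR0 : 0 < R) (hR1 : R < 1) {n : ℕ} (hn : 1 ≤ n) :
    F R n = (poch (1/2) n / (n.factorial * (n:ℝ) ^ ((1:ℝ)/2-1))) *
      (poch R n / (n.factorial * (n:ℝ) ^ (R-1))) *
      (poch (1-R) n / (n.factorial * (n:ℝ) ^ ((1-R)-1))) *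
      (Real.pi ^ ((3:ℝ)/2) / Real.sin (Real.pi * R)) := by
  have hn0 : (0:ℝ) < n := by exact_mod_cast hn
  have hmul : (Real.pi * n) ^ ((3:ℝ)/2) = Real.pi ^ ((3:ℝ)/2) * (n:ℝ) ^ ((3:ℝ)/2) :=
    Real.mul_rpow Real.pi_pos.le hn0.le
  set x1 := (n:ℝ) ^ ((1:ℝ)/2-1) with hx1def
  set x2 := (n:ℝ) ^ (R-1) with hx2def
  set x3 := (n:ℝ) ^ ((1-R)-1) with hx3def
  set A := (n:ℝ) ^ ((3:ℝ)/2) with hAdef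
  have hexp : x1 * x2 * x3 * A = 1 := by
    rw [hx1def, hx2def, hx3def, hAdef, ← Real.rpow_add hn0, ← Real.rpow_add hn0,
      ← Real.rpow_add hn0]
    rw [show ((1:ℝ)/2-1) + (R-1) + ((1-R)-1) + (3:ℝ)/2 = 0 by ring, Real.rpow_zero]
  have hA : A = 1 / (x1 * x2 * x3) := eq_one_div_of_mul_eq_one_left (by rw [← hexp]; ring)
  have hf : (0:ℝ) < n.factorial := by positivity
  have h1 : (0:ℝ) < x1 := Real.rpow_pos_of_pos hn0 _
  have h2 : (0:ℝ) < x2 := Real.rpow_pos_of_pos hn0 _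
  have h3 : (0:ℝ) < x3 := Real.rpow_pos_of_pos hn0 _
  have hs := (sinpos hR0 hR1).ne'
  rw [F, hmul, hA]
  field_simp

lemma F_tendsto {R : ℝ} (hR0 : 0 < R) (hR1 : R < 1) :
    Tendsto (F R) atTop (nhds 1) := by
  have h1 := tendsto_g (a := 1/2) (by norm_num)
  have h2 := tendsto_g hR0
  have h3 := tendsto_g (a := 1-R) (by linarith)
  have hs := sinpos hR0 hR1
  have key := ((h1.mul h2).mul h3).mul
    (tendsto_const_nhds (x := Real.pi ^ ((3:ℝ)/2) / Real.sin (Real.pi * R)))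
  have hL : 1 / Real.Gamma (1/2) * (1 / Real.Gamma R) * (1 / Real.Gamma (1-R)) *
      (Real.pi ^ ((3:ℝ)/2) / Real.sin (Real.pi * R)) = 1 := by
    rw [Real.Gamma_one_half_eq, Real.sqrt_eq_rpow,
      show (3:ℝ)/2 = 1/2 + 1 by norm_num, Real.rpow_add Real.pi_pos, Real.rpow_one]
    have h4 : Real.Gamma R * Real.Gamma (1-R) * Real.sin (Real.pi * R) = Real.pi := by
      rw [Real.Gamma_mul_Gamma_one_sub R]; field_simp
    have hG1 := Real.Gamma_pos_of_pos hR0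
    have hG2 := Real.Gamma_pos_of_pos (show (0:ℝ) < 1-R by linarith)
    have hsp : (0:ℝ) < Real.pi ^ ((1:ℝ)/2) := Real.rpow_pos_of_pos Real.pi_pos _
    generalize Real.sin (Real.pi * R) = s at h4 hs ⊢
    generalize Real.pi ^ ((1:ℝ)/2) = q at hsp ⊢
    rw [← h4]
    field_simp
  rw [← hL]
  refine key.congr' ?_
  filter_upwards [eventually_ge_atTop 1] with n hn
  exact (F_eq hR0 hR1 hn).symm

lemma log_one_sub_lower {x : ℝ} (h0 : 0 ≤ x) (h1 : x ≤ 1/2) :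
    -x - 2*x^2 ≤ Real.log (1 - x) := by
  have hx : (0:ℝ) < 1 - x := by linarith
  have h2 : Real.log (1-x)⁻¹ ≤ (1-x)⁻¹ - 1 := Real.log_le_sub_one_of_pos (by positivity)
  rw [Real.log_inv] at h2
  have h3 : 1 - (1-x)⁻¹ ≤ Real.log (1-x) := by linarith
  have h5 : (1-x)⁻¹ ≤ 1 + x + 2*x^2 := by
    rw [inv_eq_one_div, div_le_iff₀ hx]
    nlinarith
  linarith

lemma log_one_sub_upper {x : ℝ} (h0 : 0 ≤ x) (h1 : x < 1) :
    Real.log (1 - x) ≤ -x := by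
  have := Real.log_le_sub_one_of_pos (show (0:ℝ) < 1 - x by linarith)
  linarith

lemma log_one_add_lower {y : ℝ} (h0 : 0 ≤ y) : y - y^2 ≤ Real.log (1 + y) := by
  have hy : (0:ℝ) < 1 + y := by linarith
  have h2 : Real.log (1+y)⁻¹ ≤ (1+y)⁻¹ - 1 := Real.log_le_sub_one_of_pos (by positivity)
  rw [Real.log_inv] at h2
  have h5 : (1+y)⁻¹ ≤ 1 - y + y^2 := by
    rw [inv_eq_one_div, div_le_iff₀ hy]
    nlinarith
  linarith

lemma log_one_add_upper {y : ℝ} (h0 : 0 ≤ y) : Real.log (1 + y) ≤ y := by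
  have := Real.log_le_sub_one_of_pos (show (0:ℝ) < 1 + y by linarith)
  linarith

lemma F_pos {R : ℝ} (hR0 : 0 < R) (hR1 : R < 1) {n : ℕ} (hn : 1 ≤ n) : 0 < F R n := by
  have hn0 : (0:ℝ) < n := by exact_mod_cast hn
  have p1 := poch_pos (show (0:ℝ) < 1/2 by norm_num) n
  have p2 := poch_pos hR0 n
  have p3 := poch_pos (show (0:ℝ) < 1-R by linarith) n
  have hs := sinpos hR0 hR1
  have hf : (0:ℝ) < (n.factorial : ℝ) := by positivity
  have hrp : (0:ℝ) < (Real.pi * n) ^ ((3:ℝ)/2) :=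
    Real.rpow_pos_of_pos (by positivity) _
  rw [F]
  positivity

lemma F_succ {R : ℝ} (hR0 : 0 < R) (hR1 : R < 1) {n : ℕ} (hn : 1 ≤ n) :
    F R (n+1) = F R n * ((1 - (1/2)*(1/((n:ℝ)+1))) * (1 - (1-R)*(1/((n:ℝ)+1))) *
      (1 - R*(1/((n:ℝ)+1))) * ((1 + 1/(n:ℝ)) ^ ((3:ℝ)/2))) := by
  have hn0 : (0:ℝ) < n := by exact_mod_cast hn
  have hrpow : (Real.pi * ((n:ℝ)+1)) ^ ((3:ℝ)/2) =
      (Real.pi * n) ^ ((3:ℝ)/2) * (1 + 1/(n:ℝ)) ^ ((3:ℝ)/2) := by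
    rw [← Real.mul_rpow (by positivity) (by positivity)]
    congr 1
    field_simp
  have hs := (sinpos hR0 hR1).ne'
  have hf : (0:ℝ) < (n.factorial : ℝ) := by positivity
  rw [F, F, poch_succ, poch_succ, poch_succ, Nat.factorial_succ]
  push_cast
  rw [hrpow]
  field_simp
  ring

lemma arith_bound {A B R L1 L2 L3 LY : ℝ} (hA0 : 0 < A) (hB0 : 0 < B) (hAB : A ≤ B)
    (hB1 : B ≤ 1) (hBA : B - A = A*B) (hR0 : 0 < R) (hR1 : R < 1)
    (h1u : L1 ≤ -((1/2)*A)) (h1l : -((1/2)*A) - 2*((1/2)*A)^2 ≤ L1)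
    (h2u : L2 ≤ -((1-R)*A)) (h2l : -((1-R)*A) - 2*((1-R)*A)^2 ≤ L2)
    (h3u : L3 ≤ -(R*A)) (h3l : -(R*A) - 2*(R*A)^2 ≤ L3)
    (hyu : LY ≤ B) (hyl : B - B^2 ≤ LY) :
    |L1 + L2 + L3 + (3/2)*LY| ≤ 8*B^2 := by
  have hA2 : A^2 ≤ B^2 := by nlinarith
  rw [abs_le]
  constructor
  · nlinarith [mul_le_mul_of_nonneg_right hAB hB0.le, sq_nonneg (1-R), sq_nonneg R,
      sq_nonneg A, sq_nonneg B]
  · nlinarith [mul_le_mul_of_nonneg_right hAB hB0.le, sq_nonneg (1-R), sq_nonneg R,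
      sq_nonneg A, sq_nonneg B, sq_nonneg (R - 1/2), mul_pos hA0 hB0]

lemma logF_diff {R : ℝ} (hR0 : 0 < R) (hR1 : R < 1) {n : ℕ} (hn : 1 ≤ n) :
    |Real.log (F R (n+1)) - Real.log (F R n)| ≤ 8 / (n:ℝ)^2 := by
  have hn0 : (0:ℝ) < n := by exact_mod_cast hn
  have hn1 : (1:ℝ) ≤ n := by exact_mod_cast hn
  have hN : (0:ℝ) < (n:ℝ) + 1 := by linarith
  have hA0 : (0:ℝ) < 1/((n:ℝ)+1) := by positivity
  have hB0 : (0:ℝ) < 1/(n:ℝ) := by positivity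
  have hAB : 1/((n:ℝ)+1) ≤ 1/(n:ℝ) := one_div_le_one_div_of_le hn0 (by linarith)
  have hB1 : 1/(n:ℝ) ≤ 1 := by rw [div_le_one hn0]; linarith
  have hBA : 1/(n:ℝ) - 1/((n:ℝ)+1) = (1/((n:ℝ)+1)) * (1/(n:ℝ)) := by
    field_simp
    ring
  have hA2 : 1/((n:ℝ)+1) ≤ 1/2 := by rw [div_le_iff₀ hN]; linarith
  have hx10 : (0:ℝ) ≤ (1/2)*(1/((n:ℝ)+1)) := by positivity
  have hx20 : (0:ℝ) ≤ (1-R)*(1/((n:ℝ)+1)) := by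
    apply mul_nonneg (by linarith) hA0.le
  have hx30 : (0:ℝ) ≤ R*(1/((n:ℝ)+1)) := by positivity
  have hx1h : (1/2)*(1/((n:ℝ)+1)) ≤ 1/2 := by nlinarith
  have hx2h : (1-R)*(1/((n:ℝ)+1)) ≤ 1/2 := by nlinarith
  have hx3h : R*(1/((n:ℝ)+1)) ≤ 1/2 := by nlinarith
  have h1p : (0:ℝ) < 1 - (1/2)*(1/((n:ℝ)+1)) := by linarith
  have h2p : (0:ℝ) < 1 - (1-R)*(1/((n:ℝ)+1)) := by linarith
  have h3p : (0:ℝ) < 1 - R*(1/((n:ℝ)+1)) := by linarith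
  have hyp : (0:ℝ) < 1 + 1/(n:ℝ) := by linarith
  have hFd : Real.log (F R (n+1)) - Real.log (F R n) =
      Real.log (1 - (1/2)*(1/((n:ℝ)+1))) + Real.log (1 - (1-R)*(1/((n:ℝ)+1))) +
      Real.log (1 - R*(1/((n:ℝ)+1))) + (3/2) * Real.log (1 + 1/(n:ℝ)) := by
    rw [F_succ hR0 hR1 hn]
    have hr4 : (0:ℝ) < (1 + 1/(n:ℝ)) ^ ((3:ℝ)/2) := Real.rpow_pos_of_pos hyp _
    rw [Real.log_mul (F_pos hR0 hR1 hn).ne' (by positivity),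
      Real.log_mul (by positivity) hr4.ne',
      Real.log_mul (by positivity) h3p.ne',
      Real.log_mul h1p.ne' h2p.ne',
      Real.log_rpow hyp]
    ring
  rw [hFd, show (8:ℝ)/(n:ℝ)^2 = 8*(1/(n:ℝ))^2 by rw [div_pow]; ring]
  exact arith_bound hA0 hB0 hAB hB1 hBA hR0 hR1
    (log_one_sub_upper hx10 (by linarith))
    (log_one_sub_lower hx10 hx1h)
    (log_one_sub_upper hx20 (by linarith))
    (log_one_sub_lower hx20 hx2h)
    (log_one_sub_upper hx30 (by linarith))
    (log_one_sub_lower hx30 hx3h)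
    (log_one_add_upper hB0.le)
    (log_one_add_lower hB0.le)

lemma logF_small {R : ℝ} (hR0 : 0 < R) (hR1 : R < 1) {n : ℕ} (hn : 1 ≤ n) :
    |Real.log (F R n)| ≤ 16 / (n:ℝ) := by
  have hlim : Tendsto (fun m : ℕ => Real.log (F R m)) atTop (nhds 0) := by
    simpa using (F_tendsto hR0 hR1).log one_ne_zero
  have hn0 : (0:ℝ) < n := by exact_mod_cast hn
  have key : ∀ m, n ≤ m →
      |Real.log (F R n) - Real.log (F R m)| ≤ 16 * (1/(n:ℝ) - 1/(m:ℝ)) := by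
    intro m hm
    induction m, hm using Nat.le_induction with
    | base => simp
    | succ k hk ih =>
      have hk1 : 1 ≤ k := le_trans hn hk
      have hk0 : (0:ℝ) < k := by exact_mod_cast hk1
      have hk1' : (1:ℝ) ≤ k := by exact_mod_cast hk1
      have step := logF_diff hR0 hR1 hk1
      have tri : |Real.log (F R n) - Real.log (F R (k+1))| ≤
          |Real.log (F R n) - Real.log (F R k)| +
          |Real.log (F R (k+1)) - Real.log (F R k)| := by
        rw [abs_sub_comm (Real.log (F R (k+1)))]
        exact abs_sub_le _ _ _
      have hstep2 : 8/(k:ℝ)^2 ≤ 16 * (1/(k:ℝ) - 1/((k:ℝ)+1)) := by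
        have he : (16:ℝ)*(1/(k:ℝ) - 1/((k:ℝ)+1)) = 16/((k:ℝ)*((k:ℝ)+1)) := by
          field_simp
          ring
        rw [he, div_le_div_iff₀ (by positivity) (by positivity)]
        nlinarith
      have hcast : ((k+1 : ℕ):ℝ) = (k:ℝ) + 1 := by push_cast; ring
      rw [hcast]
      calc |Real.log (F R n) - Real.log (F R (k+1))|
          ≤ 16 * (1/(n:ℝ) - 1/(k:ℝ)) + 8/(k:ℝ)^2 := by
            exact tri.trans (add_le_add ih step)
        _ ≤ 16 * (1/(n:ℝ) - 1/((k:ℝ)+1)) := by linarith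
  have hle : ∀ m, n ≤ m → |Real.log (F R n) - Real.log (F R m)| ≤ 16/(n:ℝ) := by
    intro m hm
    have hm0 : (0:ℝ) ≤ 1/(m:ℝ) := by positivity
    refine (key m hm).trans ?_
    rw [show (16:ℝ)/(n:ℝ) = 16 * (1/(n:ℝ)) by ring]
    nlinarith
  have h2 : Tendsto (fun m : ℕ => |Real.log (F R n) - Real.log (F R m)|) atTop
      (nhds |Real.log (F R n) - 0|) := (tendsto_const_nhds.sub hlim).abs
  have h3 := le_of_tendsto h2 (eventually_atTop.2 ⟨n, hle⟩)
  simpa using h3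

lemma abs_exp_sub_one_le' (t : ℝ) : |Real.exp t - 1| ≤ |t| * Real.exp |t| := by
  rcases le_or_gt 0 t with h | h
  · rw [abs_of_nonneg h, abs_of_nonneg (by linarith [Real.one_le_exp h] : (0:ℝ) ≤ Real.exp t - 1)]
    have h1 : 1 - t ≤ Real.exp (-t) := by linarith [Real.add_one_le_exp (-t)]
    have h2 : Real.exp t * (1 - t) ≤ Real.exp t * Real.exp (-t) :=
      mul_le_mul_of_nonneg_left h1 (Real.exp_pos t).le
    rw [← Real.exp_add] at h2
    simp at h2
    nlinarith
  · rw [abs_of_neg h, abs_of_nonpos (by nlinarith [Real.exp_lt_one_iff.mpr h] : Real.exp t - 1 ≤ 0)]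
    have h1 : t + 1 ≤ Real.exp t := Real.add_one_le_exp t
    have h2 : 1 ≤ Real.exp (-t) := Real.one_le_exp (by linarith)
    nlinarith

lemma F_close {R : ℝ} (hR0 : 0 < R) (hR1 : R < 1) {n : ℕ} (hn : 1 ≤ n) :
    |F R n - 1| ≤ (16 * Real.exp 16) / (n:ℝ) := by
  have hn0 : (0:ℝ) < n := by exact_mod_cast hn
  have hn1 : (1:ℝ) ≤ n := by exact_mod_cast hn
  have ht := logF_small hR0 hR1 hn
  have hFe : F R n = Real.exp (Real.log (F R n)) := (Real.exp_log (F_pos hR0 hR1 hn)).symm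
  have h1 := abs_exp_sub_one_le' (Real.log (F R n))
  have h16 : (16:ℝ)/(n:ℝ) ≤ 16 := by rw [div_le_iff₀ hn0]; linarith
  have hexp : Real.exp |Real.log (F R n)| ≤ Real.exp 16 :=
    Real.exp_le_exp.mpr (le_trans ht h16)
  calc |F R n - 1| = |Real.exp (Real.log (F R n)) - 1| := by rw [← hFe]
    _ ≤ |Real.log (F R n)| * Real.exp |Real.log (F R n)| := h1
    _ ≤ (16/(n:ℝ)) * Real.exp 16 := by
        apply mul_le_mul ht hexp (Real.exp_pos _).le (by positivity)
    _ = (16 * Real.exp 16) / (n:ℝ) := by ring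

theorem pochhammer_product_asymptotics (R : ℝ) (hR0 : 0 < R) (hR1 : R < 1) :
    (fun n : ℕ =>
        poch (1 / 2) n * poch R n * poch (1 - R) n / (Nat.factorial n : ℝ) ^ 3 *
          (Real.pi * (n : ℝ)) ^ ((3 : ℝ) / 2) / Real.sin (Real.pi * R) - 1)
      =O[atTop] (fun n : ℕ => 1 / (n : ℝ)) ∧
    ∃ C > 0, ∀ n : ℕ, 1 ≤ n →
      |poch (1 / 2) n * poch R n * poch (1 - R) n / (Nat.factorial n : ℝ) ^ 3 *
          (Real.pi * (n : ℝ)) ^ ((3 : ℝ) / 2) / Real.sin (Real.pi * R) - 1| ≤ C / (n : ℝ) := by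
  have main : ∀ n : ℕ, 1 ≤ n →
      |poch (1 / 2) n * poch R n * poch (1 - R) n / (Nat.factorial n : ℝ) ^ 3 *
          (Real.pi * (n : ℝ)) ^ ((3 : ℝ) / 2) / Real.sin (Real.pi * R) - 1| ≤
        (16 * Real.exp 16) / (n:ℝ) := by
    intro n hn
    exact F_close hR0 hR1 hn
  constructor
  · rw [isBigO_iff]
    refine ⟨16 * Real.exp 16, ?_⟩
    filter_upwards [eventually_ge_atTop 1] with n hn
    have hn0 : (0:ℝ) < n := by exact_mod_cast hn
    calc ‖poch (1 / 2) n * poch R n * poch (1 - R) n / (Nat.factorial n : ℝ) ^ 3 *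
          (Real.pi * (n : ℝ)) ^ ((3 : ℝ) / 2) / Real.sin (Real.pi * R) - 1‖
        ≤ (16 * Real.exp 16) / (n:ℝ) := main n hn
      _ = 16 * Real.exp 16 * ‖1/(n:ℝ)‖ := by
          rw [Real.norm_eq_abs, abs_of_nonneg (by positivity : (0:ℝ) ≤ 1/(n:ℝ))]
          ring
  · exact ⟨16 * Real.exp 16, by positivity, main⟩
end

section
/- For every integer k ≥ 6 and every real R with 0 ≤ R ≤ 1, setting r = R(1−R), σ₁ = −1/8 − r, σ₃ = 1/192 + r²/6, and ϱ_k = (1/2 − (1/2)^k)/k + (R − R^k)/k + ((1−R) − (1−R)^k)/k + σ₁ + C(k−1,2)·σ₃ (where C(k−1,2) is the binomial coefficient), one has ϱ_k > 0. -/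
open Real

lemma key_ineq (x r : ℝ) (hx : 6 ≤ x) (hr0 : 0 ≤ r) :
    0 < 31/64 + 6*r - 9*r^2 + 2*r^3 - x*(1/8 + r) + x*(x-1)*(x-2)*(1/192 + r^2/6)/2 := by
  have hu : (0:ℝ) ≤ x - 6 := by linarith
  nlinarith [mul_nonneg hu (sq_nonneg (r - 3/37)), mul_nonneg (mul_nonneg hu hu) (sq_nonneg r),
    mul_nonneg (mul_nonneg hu hu) hu, mul_nonneg (mul_nonneg (mul_nonneg hu hu) hu) (sq_nonneg r),
    mul_nonneg hr0 (sq_nonneg r), sq_nonneg r, mul_nonneg hu hu, hu]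

theorem rho_positive (k : ℕ) (hk : 6 ≤ k) (R : ℝ) (hR0 : 0 ≤ R) (hR1 : R ≤ 1)
    (r σ1 σ3 ρ : ℝ) (hr : r = R * (1 - R)) (h1 : σ1 = -1 / 8 - r)
    (h3 : σ3 = 1 / 192 + r ^ 2 / 6)
    (hρ : ρ = (1 / 2 - (1 / 2 : ℝ) ^ k) / (k : ℝ) + (R - R ^ k) / (k : ℝ) +
      ((1 - R) - (1 - R) ^ k) / (k : ℝ) + σ1 + (Nat.choose (k - 1) 2 : ℝ) * σ3) :
    0 < ρ := by
  have hk6 : (6:ℝ) ≤ (k:ℝ) := by exact_mod_cast hk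
  have hkpos : (0:ℝ) < (k:ℝ) := by linarith
  have hr0 : 0 ≤ r := by rw [hr]; exact mul_nonneg hR0 (by linarith)
  have hchoose : ((Nat.choose (k - 1) 2 : ℕ) : ℝ) = ((k:ℝ) - 1) * ((k:ℝ) - 2) / 2 := by
    rw [Nat.cast_choose_two]
    have h1k : 1 ≤ k := by omega
    rw [Nat.cast_sub h1k]
    push_cast
    ring
  have hR1' : 0 ≤ 1 - R := by linarith
  have hp1 : (1/2:ℝ) ^ k ≤ (1/2:ℝ) ^ 6 := pow_le_pow_of_le_one (by norm_num) (by norm_num) hk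
  have hp2 : R ^ k ≤ R ^ 6 := pow_le_pow_of_le_one hR0 hR1 hk
  have hp3 : (1 - R) ^ k ≤ (1 - R) ^ 6 := pow_le_pow_of_le_one hR1' (by linarith) hk
  have hid : (R - R ^ 6) + ((1 - R) - (1 - R) ^ 6) = 6*r - 9*r^2 + 2*r^3 := by
    subst hr; ring
  have hcalc : (k:ℝ) * ρ = (1/2 - (1/2:ℝ)^k) + (R - R^k) + ((1 - R) - (1 - R)^k)
      + (k:ℝ) * (-1/8 - r) + (k:ℝ) * (((k:ℝ) - 1) * ((k:ℝ) - 2) / 2 * (1/192 + r^2/6)) := by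
    rw [hρ, h1, h3, hchoose]
    field_simp
  have hkey := key_ineq (k:ℝ) r hk6 hr0
  have hnum : (1/2:ℝ) ^ 6 = 1/64 := by norm_num
  have hpos : 0 < (k:ℝ) * ρ := by
    rw [hcalc]
    nlinarith [hkey, hp1, hp2, hp3, hid, hnum]
  nlinarith [hpos, hkpos]
end

section
/- For every integer k ≥ 8 and every real R with 0 ≤ R ≤ 1, setting r = R(1−R), σ₁ = −1/8 − r, σ₃ = 1/192 + r²/6, σ₅ = −1/640 − r²/30 − r³/15, and ϱ̃_k = (1/2 − (1/2)^k)/k + (R − R^k)/k + ((1−R) − (1−R)^k)/k + σ₁ + C(k−1,2)·σ₃ + C(k−1,4)·σ₅ (where C(m,j) is the binomial coefficient), one has ϱ̃_k < 0. -/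
open Real

set_option maxHeartbeats 2000000 in
theorem rho_tilde_negative (k : ℕ) (hk : 8 ≤ k) (R : ℝ) (hR0 : 0 ≤ R) (hR1 : R ≤ 1)
    (r σ1 σ3 σ5 ρ : ℝ) (hr : r = R * (1 - R)) (h1 : σ1 = -1 / 8 - r)
    (h3 : σ3 = 1 / 192 + r ^ 2 / 6) (h5 : σ5 = -1 / 640 - r ^ 2 / 30 - r ^ 3 / 15)
    (hρ : ρ = (1 / 2 - (1 / 2 : ℝ) ^ k) / (k : ℝ) + (R - R ^ k) / (k : ℝ) +
      ((1 - R) - (1 - R) ^ k) / (k : ℝ) + σ1 + (Nat.choose (k - 1) 2 : ℝ) * σ3 +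
      (Nat.choose (k - 1) 4 : ℝ) * σ5) :
    ρ < 0 := by
  have hR1' : 0 ≤ 1 - R := by linarith
  have hr0 : 0 ≤ r := hr ▸ mul_nonneg hR0 hR1'
  have hr4 : r ≤ 1 / 4 := by rw [hr]; nlinarith [sq_nonneg (R - 1/2)]
  rcases lt_or_ge k 12 with hlt | hge
  · have hr2 : (0:ℝ) ≤ r ^ 2 := pow_nonneg hr0 2
    have hr3 : (0:ℝ) ≤ r ^ 3 := pow_nonneg hr0 3
    have hr4' : (0:ℝ) ≤ r ^ 4 := pow_nonneg hr0 4
    have hr5 : r ^ 5 ≤ 1/4 * r ^ 4 := by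
      have := mul_le_mul_of_nonneg_left hr4 hr4'
      calc r ^ 5 = r ^ 4 * r := by ring
        _ ≤ r ^ 4 * (1/4) := this
        _ = 1/4 * r ^ 4 := by ring
    interval_cases k
    · -- k = 8
      have hp : R ^ 8 + (1 - R) ^ 8 = 1 - 8*r + 20*r^2 - 16*r^3 + 2*r^4 := by rw [hr]; ring
      rw [hρ, h1, h3, h5]
      norm_num [Nat.choose]
      linarith [hp]
    · -- k = 9
      have hp : R ^ 9 + (1 - R) ^ 9 = 1 - 9*r + 27*r^2 - 30*r^3 + 9*r^4 := by rw [hr]; ring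
      rw [hρ, h1, h3, h5]
      norm_num [Nat.choose]
      linarith [hp]
    · -- k = 10
      have hp : R ^ 10 + (1 - R) ^ 10 = 1 - 10*r + 35*r^2 - 50*r^3 + 25*r^4 - 2*r^5 := by
        rw [hr]; ring
      rw [hρ, h1, h3, h5]
      norm_num [Nat.choose]
      linarith [hp]
    · -- k = 11
      have hp : R ^ 11 + (1 - R) ^ 11 = 1 - 11*r + 44*r^2 - 77*r^3 + 55*r^4 - 11*r^5 := by
        rw [hr]; ring
      rw [hρ, h1, h3, h5]
      norm_num [Nat.choose]
      linarith [hp]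
  · -- k ≥ 12
    obtain ⟨m, rfl⟩ : ∃ m, k = m + 12 := ⟨k - 12, by omega⟩
    have e1 : m + 12 - 1 = m + 11 := by omega
    rw [e1] at hρ
    have hc2 : 2 * Nat.choose (m+11) 2 = (m+10)*(m+11) := by
      have h := Nat.descFactorial_eq_factorial_mul_choose (m+11) 2
      simp [Nat.descFactorial, Nat.factorial, Nat.add_sub_cancel] at h
      linarith
    have hc4 : 24 * Nat.choose (m+11) 4 = (m+8)*(m+9)*(m+10)*(m+11) := by
      have h := Nat.descFactorial_eq_factorial_mul_choose (m+11) 4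
      simp [Nat.descFactorial, Nat.factorial, Nat.add_sub_cancel] at h
      linarith
    set x : ℝ := (m : ℝ) with hx
    have hx0 : 0 ≤ x := Nat.cast_nonneg m
    have hC2 : (Nat.choose (m+11) 2 : ℝ) = (x+10)*(x+11)/2 := by
      have := congrArg (fun n : ℕ => (n : ℝ)) hc2
      push_cast at this
      linarith
    have hC4 : (Nat.choose (m+11) 4 : ℝ) = (x+8)*(x+9)*(x+10)*(x+11)/24 := by
      have := congrArg (fun n : ℕ => (n : ℝ)) hc4
      push_cast at this
      linarith
    have hkpos : (0:ℝ) < (m + 12 : ℕ) := by positivity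
    have hkR : ((m + 12 : ℕ) : ℝ) = x + 12 := by push_cast; ring
    -- bound the first three terms by 3/(2k) ≤ 1/8
    have hpow1 : (0:ℝ) ≤ (1/2 : ℝ) ^ (m+12) := by positivity
    have hpow2 : (0:ℝ) ≤ R ^ (m+12) := pow_nonneg hR0 _
    have hpow3 : (0:ℝ) ≤ (1-R) ^ (m+12) := pow_nonneg hR1' _
    have hsum : (1 / 2 - (1 / 2 : ℝ) ^ (m+12)) / ((m+12 : ℕ) : ℝ) +
        (R - R ^ (m+12)) / ((m+12 : ℕ) : ℝ) +
        ((1 - R) - (1 - R) ^ (m+12)) / ((m+12 : ℕ) : ℝ) ≤ 1/8 := by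
      rw [← add_div, ← add_div, div_le_iff₀ hkpos, hkR]
      linarith only [hpow1, hpow2, hpow3, hx0]
    have hT : σ1 + (Nat.choose (m+11) 2 : ℝ) * σ3 + (Nat.choose (m+11) 4 : ℝ) * σ5 < -1/8 := by
      rw [h1, h3, h5, hC2, hC4]
      have hx1 : (0:ℝ) ≤ x^2 := sq_nonneg x
      have hx2 : (0:ℝ) ≤ x^3 := pow_nonneg hx0 3
      have hx3 : (0:ℝ) ≤ x^4 := pow_nonneg hx0 4
      have hP : (0:ℝ) ≤ (x+10)*(x+11) := by positivity
      have hQ : (60:ℝ) ≤ (x+8)*(x+9) := by nlinarith only [hx0, hx1]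
      have key1 : 0 ≤ r^2 * ((x+10)*(x+11)) * ((x+8)*(x+9) - 60) :=
        mul_nonneg (mul_nonneg (pow_nonneg hr0 2) hP) (by linarith only [hQ])
      have key2 : 110*32 ≤ ((x+10)*(x+11)) * ((x+8)*(x+9) - 40) := by
        have e : ((x+10)*(x+11)) * ((x+8)*(x+9) - 40) =
            x^4 + 38*x^3 + 499*x^2 + 2542*x + 3520 := by ring
        rw [e]; linarith only [hx0, hx1, hx2, hx3]
      have key3 : 0 ≤ r^3 * ((x+8)*(x+9)*(x+10)*(x+11)) :=
        mul_nonneg (pow_nonneg hr0 3) (by positivity)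
      linarith only [key1, key2, key3, hr0]
    rw [hρ]
    linarith only [hsum, hT]
end

section
/- For every integer n ≥ 1, let ẽ_n be the real number defined by Σ_{k=n}^∞ s̃_k = (s̃_n/(1 − 99⁻⁴)) · (1 − 1/(192119200·n) + 248104223/(36909787008640000·n²) − ẽ_n/n³). Then 3.558·10⁻⁹ < ẽ_n < 7.463·10⁻⁹. -/
open Real Filter

/-- `S̃ = 1103/26390` from Ramanujan's series. -/
noncomputable def Sr : ℝ := 1103 / 26390

/-- The terms `s̃_k = (4k)!/(k!)⁴ · (k+S̃)/396^{4k}` of Ramanujan's series. -/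
noncomputable def sr (k : ℕ) : ℝ :=
  (Nat.factorial (4 * k) : ℝ) / (Nat.factorial k : ℝ) ^ 4 * ((k : ℝ) + Sr) / 396 ^ (4 * k)

/-- truncated expansion -/
noncomputable def gR (c x : ℝ) : ℝ :=
  (1 - 1 / (192119200 * x) + 248104223 / (36909787008640000 * x ^ 2) - c / x ^ 3) /
    (1 - 1 / 99 ^ 4)

/-- the ratio `sr (k+1) / sr k` as a rational function -/
noncomputable def QR (x : ℝ) : ℝ :=
  (4*x+1)*(4*x+2)*(4*x+3)*(26390*x+27493) / (64*(x+1)^3*(26390*x+1103)*99^4)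

lemma sr_pos (k : ℕ) : 0 < sr k := by
  unfold sr Sr
  have h1 : (0:ℝ) < (Nat.factorial (4*k) : ℝ) := by exact_mod_cast (4*k).factorial_pos
  have h2 : (0:ℝ) < (Nat.factorial k : ℝ) := by exact_mod_cast k.factorial_pos
  have h3 : (0:ℝ) ≤ (k:ℝ) := Nat.cast_nonneg k
  positivity

lemma sr_succ (k : ℕ) : sr (k+1) = QR (k:ℝ) * sr k := by
  have h1 : 4*(k+1) = (4*k) + 1 + 1 + 1 + 1 := by omega
  have hf : ((Nat.factorial (4*(k+1))) : ℝ)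
      = ((4*(k:ℝ)+4)*((4*k+3)*((4*k+2)*((4*k+1)*((Nat.factorial (4*k)) : ℝ))))) := by
    rw [h1, Nat.factorial_succ, Nat.factorial_succ, Nat.factorial_succ, Nat.factorial_succ]
    push_cast; ring
  have hk1 : ((Nat.factorial (k+1)) : ℝ) = ((k:ℝ)+1) * (Nat.factorial k : ℝ) := by
    rw [Nat.factorial_succ]; push_cast; ring
  have hp : (396:ℝ)^(4*(k+1)) = 396^(4*k) * 396^4 := by
    rw [show 4*(k+1) = 4*k+4 from by ring, pow_add]
  unfold sr QR Sr
  rw [hf, hk1, hp]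
  have h2 : ((Nat.factorial k : ℝ)) ≠ 0 := by
    exact_mod_cast k.factorial_ne_zero
  have h3 : (396:ℝ)^(4*k) ≠ 0 := by positivity
  have h4 : ((k:ℝ)+1) ≠ 0 := by positivity
  have h5 : (26390*(k:ℝ)+1103) ≠ 0 := by positivity
  push_cast
  field_simp
  ring

lemma gR_nonneg {c : ℝ} (hc0 : 0 ≤ c) (hc1 : c ≤ 1e-8) {x : ℝ} (hx : 1 ≤ x) :
    0 ≤ gR c x := by
  have hx0 : (0:ℝ) < x := by linarith
  have hx3 : (1:ℝ) ≤ x^3 := one_le_pow₀ hx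
  have h1 : 1/(192119200*x) ≤ 1/192119200 := by
    apply one_div_le_one_div_of_le (by norm_num)
    nlinarith
  have h2 : (0:ℝ) ≤ 248104223/(36909787008640000*x^2) := by positivity
  have h3 : c/x^3 ≤ c := div_le_self hc0 hx3
  unfold gR
  apply div_nonneg _ (by norm_num)
  have hnum : (1:ℝ)/192119200 + 1e-8 < 1 := by norm_num
  linarith

lemma gR_le_two {c : ℝ} (hc0 : 0 ≤ c) {x : ℝ} (hx : 1 ≤ x) : gR c x ≤ 2 := by
  have hx0 : (0:ℝ) < x := by linarith
  have hx3 : (0:ℝ) < x^3 := by positivity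
  have h1 : (0:ℝ) ≤ 1/(192119200*x) := by positivity
  have h3 : (0:ℝ) ≤ c/x^3 := by positivity
  have h2 : 248104223/(36909787008640000*x^2) ≤ 248104223/36909787008640000 := by
    apply div_le_div_of_nonneg_left (by norm_num) (by norm_num)
    nlinarith
  unfold gR
  rw [div_le_iff₀ (by norm_num : (0:ℝ) < 1 - 1/99^4)]
  nlinarith

noncomputable def cLo : ℝ := 35585/10^13
noncomputable def cHi : ℝ := 74628/10^13

lemma key_lo (x : ℝ) (hx : 1 ≤ x) : 1 + QR x * gR cLo (x+1) ≤ gR cLo x := by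
  have hx0 : (0:ℝ) < x := by linarith
  have hx1 : (0:ℝ) < x + 1 := by linarith
  have hd : (0:ℝ) < 26390*x+1103 := by linarith
  have ht : (0:ℝ) ≤ x - 1 := by linarith
  rw [← sub_nonneg]
  have hne0 : x ≠ 0 := ne_of_gt hx0
  have hne1 : x + 1 ≠ 0 := ne_of_gt hx1
  have hned : 26390*x+1103 ≠ 0 := ne_of_gt hd
  have hEq : gR cLo x - (1 + QR x * gR cLo (x+1)) =
      ((119941640936006364752239567/57671542201000000000000 : ℝ) + (233228477388795069677043874393/11534308440200000000000 : ℝ) * (x-1)^1 + (4060664367228305319314502918081/57671542201000000000000 : ℝ) * (x-1)^2 + (5791053969463008293042113248331/57671542201000000000000 : ℝ) * (x-1)^3 + (1086337445318197329950942274743/14417885550250000000000 : ℝ) * (x-1)^4 + (453523600181052882764440642449/14417885550250000000000 : ℝ) * (x-1)^5 + (89350449481683382207659513/12873112098437500000 : ℝ) * (x-1)^6 + (432514446162403707243/682923718750000 : ℝ) * (x-1)^7) /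
      ((1 - 1/99^4) * (x^3*(x+1)^6*(64*99^4)*(26390*x+1103))) := by
    unfold gR QR cLo
    field_simp
    ring
  rw [hEq]
  apply div_nonneg
  · nlinarith [pow_nonneg ht 2, pow_nonneg ht 3, pow_nonneg ht 4, pow_nonneg ht 5,
      pow_nonneg ht 6, pow_nonneg ht 7, ht]
  · have hq : (0:ℝ) < 1 - 1/99^4 := by norm_num
    have : (0:ℝ) < x^3*(x+1)^6*(64*99^4)*(26390*x+1103) := by positivity
    positivity

lemma key_hi (x : ℝ) (hx : 1 ≤ x) : gR cHi x ≤ 1 + QR x * gR cHi (x+1) := by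
  have hx0 : (0:ℝ) < x := by linarith
  have hx1 : (0:ℝ) < x + 1 := by linarith
  have hd : (0:ℝ) < 26390*x+1103 := by linarith
  have ht : (0:ℝ) ≤ x - 1 := by linarith
  rw [← sub_nonneg]
  have hne0 : x ≠ 0 := ne_of_gt hx0
  have hne1 : x + 1 ≠ 0 := ne_of_gt hx1
  have hned : 26390*x+1103 ≠ 0 := ne_of_gt hd
  have hEq : (1 + QR x * gR cHi (x+1)) - gR cHi x =
      ((3044501766867604211104648792393/72089427751250000000000 : ℝ) + (2119755896574667483383069849697/14417885550250000000000 : ℝ) * (x-1)^1 + (15109120542392777034353512170949/72089427751250000000000 : ℝ) * (x-1)^2 + (11332195701021962440218294085699/72089427751250000000000 : ℝ) * (x-1)^3 + (2364464840533550185792971767819/36044713875625000000000 : ℝ) * (x-1)^4 + (260775041823537333526416267421/18022356937812500000000 : ℝ) * (x-1)^5 + (339926284974526727366543457/257462241968750000000 : ℝ) * (x-1)^6 + (372985788682315013/3414618593750000 : ℝ) * (x-1)^7) /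
      ((1 - 1/99^4) * (x^3*(x+1)^6*(64*99^4)*(26390*x+1103))) := by
    unfold gR QR cHi
    field_simp
    ring
  rw [hEq]
  apply div_nonneg
  · nlinarith [pow_nonneg ht 2, pow_nonneg ht 3, pow_nonneg ht 4, pow_nonneg ht 5,
      pow_nonneg ht 6, pow_nonneg ht 7, ht]
  · have hq : (0:ℝ) < 1 - 1/99^4 := by norm_num
    have : (0:ℝ) < x^3*(x+1)^6*(64*99^4)*(26390*x+1103) := by positivity
    positivity

lemma step_lo (k : ℕ) (hk : 1 ≤ k) :
    sr k ≤ sr k * gR cLo (k:ℝ) - sr (k+1) * gR cLo ((k+1 : ℕ) : ℝ) := by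
  have hx : (1:ℝ) ≤ (k:ℝ) := by exact_mod_cast hk
  have hc : ((k+1 : ℕ) : ℝ) = (k:ℝ) + 1 := by push_cast; ring
  rw [hc]
  have hkey := key_lo (k:ℝ) hx
  have h := mul_le_mul_of_nonneg_left hkey (sr_pos k).le
  have hexp : sr k * (1 + QR (k:ℝ) * gR cLo ((k:ℝ)+1)) = sr k + sr (k+1) * gR cLo ((k:ℝ)+1) := by
    rw [sr_succ k]; ring
  linarith [h, hexp]

lemma step_hi (k : ℕ) (hk : 1 ≤ k) :
    sr k * gR cHi (k:ℝ) - sr (k+1) * gR cHi ((k+1 : ℕ) : ℝ) ≤ sr k := by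
  have hx : (1:ℝ) ≤ (k:ℝ) := by exact_mod_cast hk
  have hc : ((k+1 : ℕ) : ℝ) = (k:ℝ) + 1 := by push_cast; ring
  rw [hc]
  have hkey := key_hi (k:ℝ) hx
  have h := mul_le_mul_of_nonneg_left hkey (sr_pos k).le
  have hexp : sr k * (1 + QR (k:ℝ) * gR cHi ((k:ℝ)+1)) = sr k + sr (k+1) * gR cHi ((k:ℝ)+1) := by
    rw [sr_succ k]; ring
  linarith [h, hexp]

theorem ramanujan_tail_expansion (n : ℕ) (hn : 1 ≤ n) (e : ℝ)
    (he : (∑' k : ℕ, sr (n + k)) =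
      sr n / (1 - 1 / 99 ^ 4) *
        (1 - 1 / (192119200 * (n : ℝ)) + 248104223 / (36909787008640000 * (n : ℝ) ^ 2) -
          e / (n : ℝ) ^ 3)) :
    3.558e-9 < e ∧ e < 7.463e-9 := by
  have hcLo0 : (0:ℝ) ≤ cLo := by unfold cLo; norm_num
  have hcLo1 : cLo ≤ 1e-8 := by unfold cLo; norm_num
  have hcHi0 : (0:ℝ) ≤ cHi := by unfold cHi; norm_num
  have hcHi1 : cHi ≤ 1e-8 := by unfold cHi; norm_num
  have hnk : ∀ j : ℕ, 1 ≤ n + j := fun j => le_trans hn (Nat.le_add_right n j)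
  have hnkr : ∀ j : ℕ, (1:ℝ) ≤ ((n + j : ℕ) : ℝ) := fun j => by exact_mod_cast hnk j
  have hnonneg : ∀ j : ℕ, 0 ≤ sr (n + j) := fun j => (sr_pos _).le
  -- upper bound on partial sums
  have hpart1 : ∀ m, ∑ j ∈ Finset.range m, sr (n + j) ≤ sr n * gR cLo (n : ℝ) := by
    intro m
    have h1 : ∑ j ∈ Finset.range m, sr (n + j) ≤
        ∑ j ∈ Finset.range m,
          ((fun j => sr (n + j) * gR cLo ((n + j : ℕ) : ℝ)) j
            - (fun j => sr (n + j) * gR cLo ((n + j : ℕ) : ℝ)) (j + 1)) := by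
      apply Finset.sum_le_sum
      intro j _
      exact step_lo (n + j) (hnk j)
    rw [Finset.sum_range_sub' (fun j => sr (n + j) * gR cLo ((n + j : ℕ) : ℝ)) m] at h1
    have hFm : 0 ≤ sr (n + m) * gR cLo ((n + m : ℕ) : ℝ) :=
      mul_nonneg (sr_pos _).le (gR_nonneg hcLo0 hcLo1 (hnkr m))
    simp only [Nat.add_zero] at h1
    linarith
  have hsum : Summable (fun j => sr (n + j)) :=
    summable_of_sum_range_le hnonneg hpart1
  have hub : (∑' j : ℕ, sr (n + j)) ≤ sr n * gR cLo (n : ℝ) :=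
    Real.tsum_le_of_sum_range_le hnonneg hpart1
  -- lower bound
  have hpart2 : ∀ m, sr n * gR cHi (n : ℝ) - sr (n + m) * gR cHi ((n + m : ℕ) : ℝ) ≤
      ∑ j ∈ Finset.range m, sr (n + j) := by
    intro m
    have h1 : ∑ j ∈ Finset.range m,
          ((fun j => sr (n + j) * gR cHi ((n + j : ℕ) : ℝ)) j
            - (fun j => sr (n + j) * gR cHi ((n + j : ℕ) : ℝ)) (j + 1)) ≤
        ∑ j ∈ Finset.range m, sr (n + j) := by
      apply Finset.sum_le_sum
      intro j _
      exact step_hi (n + j) (hnk j)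
    rw [Finset.sum_range_sub' (fun j => sr (n + j) * gR cHi ((n + j : ℕ) : ℝ)) m] at h1
    simp only [Nat.add_zero] at h1
    linarith
  have h0 : Tendsto (fun m : ℕ => sr (n + m) * gR cHi ((n + m : ℕ) : ℝ)) atTop (nhds 0) := by
    apply squeeze_zero (fun m => mul_nonneg (sr_pos _).le (gR_nonneg hcHi0 hcHi1 (hnkr m)))
      (g := fun m => sr (n + m) * 2)
    · intro m
      exact mul_le_mul_of_nonneg_left (gR_le_two hcHi0 (hnkr m)) (sr_pos _).le
    · simpa using hsum.tendsto_atTop_zero.mul_const 2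
  have hlb : sr n * gR cHi (n : ℝ) ≤ ∑' j : ℕ, sr (n + j) := by
    have hlim : Tendsto (fun m : ℕ => sr n * gR cHi (n : ℝ)
        - sr (n + m) * gR cHi ((n + m : ℕ) : ℝ)) atTop (nhds (sr n * gR cHi (n : ℝ))) := by
      simpa using tendsto_const_nhds.sub h0
    refine le_of_tendsto hlim (Filter.Eventually.of_forall fun m => ?_)
    exact le_trans (hpart2 m) (Summable.sum_le_tsum _ (fun i _ => hnonneg i) hsum)
  -- convert he
  have heq : sr n / (1 - 1 / 99 ^ 4) *
        (1 - 1 / (192119200 * (n : ℝ)) + 248104223 / (36909787008640000 * (n : ℝ) ^ 2) -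
          e / (n : ℝ) ^ 3) = sr n * gR e (n : ℝ) := by
    unfold gR; ring
  rw [he, heq] at hub hlb
  have hsp := sr_pos n
  have hge : gR e (n : ℝ) ≤ gR cLo (n : ℝ) := le_of_mul_le_mul_left hub hsp
  have hle : gR cHi (n : ℝ) ≤ gR e (n : ℝ) := le_of_mul_le_mul_left hlb hsp
  have hD : (0:ℝ) < 1 - 1/99^4 := by norm_num
  have hn0 : (0:ℝ) < (n:ℝ) := by exact_mod_cast Nat.lt_of_lt_of_le Nat.zero_lt_one hn
  have hn3 : (0:ℝ) < (n:ℝ)^3 := by positivity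
  unfold gR at hge hle
  have h1 := mul_le_mul_of_nonneg_right hge hD.le
  have h2 := mul_le_mul_of_nonneg_right hle hD.le
  rw [div_mul_cancel₀ _ (ne_of_gt hD), div_mul_cancel₀ _ (ne_of_gt hD)] at h1 h2
  have h3 : cLo / (n:ℝ)^3 ≤ e / (n:ℝ)^3 := by linarith
  have h4 : e / (n:ℝ)^3 ≤ cHi / (n:ℝ)^3 := by linarith
  have h5 := mul_le_mul_of_nonneg_right h3 hn3.le
  have h6 := mul_le_mul_of_nonneg_right h4 hn3.le
  rw [div_mul_cancel₀ _ (ne_of_gt hn3), div_mul_cancel₀ _ (ne_of_gt hn3)] at h5 h6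
  unfold cLo at h5
  unfold cHi at h6
  constructor
  · nlinarith
  · nlinarith
end
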